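/- arXiv:1407.2224 — 4 statements merged into one kernel-verified Lean document; each statement's English description precedes it below -/
import Mathlib

section
/- The two smeared Pauli measurements A_x^λ(±) = (1/2)(I ± λσ_x) and A_z^λ(±) = (1/2)(I ± λσ_z) are NOT jointly measurable when λ > 1/√2. -/
open Matrix ComplexOrder

noncomputable def σx : Matrix (Fin 2) (Fin 2) ℂ := !![0, 1; 1, 0]
noncomputable def σz : Matrix (Fin 2) (Fin 2) ℂ := !![1, 0; 0, -1]

/-- Sign associated to a boolean outcome. -/
def sgn (b : Bool) : ℝ := if b then 1 else -1

/-- The smeared Pauli observable `(1/2)(I + sgn(b)·l·σ)`. -/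
noncomputable def smeared (σ : Matrix (Fin 2) (Fin 2) ℂ) (l : ℝ) (b : Bool) :
    Matrix (Fin 2) (Fin 2) ℂ :=
  (1 / 2 : ℂ) • ((1 : Matrix (Fin 2) (Fin 2) ℂ) + ((sgn b * l : ℝ) : ℂ) • σ)

private lemma psd2 {M : Matrix (Fin 2) (Fin 2) ℂ} (h : M.PosSemidef) :
    0 ≤ (M 0 0).re ∧ 0 ≤ (M 1 1).re ∧
      (M 0 1).re ^ 2 + (M 0 1).im ^ 2 ≤ (M 0 0).re * (M 1 1).re := by
  have hh := h.1
  have hpos := h.dotProduct_mulVec_nonneg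
  have h10 : M 1 0 = starRingEnd ℂ (M 0 1) := by
    exact (Matrix.IsHermitian.apply hh 1 0).symm ▸ rfl
  have hpim : (M 0 0).im = 0 := by
    have := congrArg Complex.im (Matrix.IsHermitian.apply hh 0 0)
    simp at this; linarith
  have hrim : (M 1 1).im = 0 := by
    have := congrArg Complex.im (Matrix.IsHermitian.apply hh 1 1)
    simp at this; linarith
  set a := (M 0 0).re with ha
  set b := (M 1 1).re with hb
  set u := (M 0 1).re with hu
  set v := (M 0 1).im with hv
  have e00 : M 0 0 = (a : ℂ) := by apply Complex.ext <;> simp [hpim, ha]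
  have e11 : M 1 1 = (b : ℂ) := by apply Complex.ext <;> simp [hrim, hb]
  have e01 : M 0 1 = (u : ℂ) + (v : ℂ) * Complex.I := by
    apply Complex.ext <;> simp [hu, hv]
  have e10 : M 1 0 = (u : ℂ) - (v : ℂ) * Complex.I := by
    rw [h10, e01]; apply Complex.ext <;> simp
  have K : ∀ c1 c2 d1 d2 : ℝ, 0 ≤ a * (c1^2 + c2^2) + b * (d1^2 + d2^2)
      + 2 * (u * (c1*d1 + c2*d2) - v * (c1*d2 - c2*d1)) := by
    intro c1 c2 d1 d2
    have := hpos ![(c1:ℂ) + c2 * Complex.I, (d1:ℂ) + d2 * Complex.I]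
    have h2 : (0:ℂ) ≤ (starRingEnd ℂ ((c1:ℂ) + c2 * Complex.I)) * (M 0 0 * ((c1:ℂ) + c2 * Complex.I) + M 0 1 * ((d1:ℂ) + d2 * Complex.I))
      + (starRingEnd ℂ ((d1:ℂ) + d2 * Complex.I)) * (M 1 0 * ((c1:ℂ) + c2 * Complex.I) + M 1 1 * ((d1:ℂ) + d2 * Complex.I)) := by
      simpa [dotProduct, mulVec, Fin.sum_univ_two] using this
    have h3 := (Complex.nonneg_iff.mp h2).1
    rw [e00, e01, e10, e11] at h3
    simp [Complex.add_re, Complex.mul_re, Complex.add_im, Complex.mul_im] at h3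
    ring_nf at h3 ⊢
    linarith
  have h1 : 0 ≤ a := by have := K 1 0 0 0; linarith
  have h2 : 0 ≤ b := by have := K 0 0 1 0; linarith
  have hd1 := K b 0 (-u) v
  have hd2 := K (-u) (-v) a 0
  have hd3 := K 1 0 (-u) v
  refine ⟨h1, h2, ?_⟩
  by_cases hab : 0 < a + b
  · nlinarith [hd1, hd2]
  · have ha0 : a = 0 := by linarith
    have hb0 : b = 0 := by linarith
    nlinarith [hd3]


private lemma halfkey (l t : ℝ) (h1 : 0 ≤ t) (h2 : l^2 ≤ 2*t^2) (h3 : 1/2 < l^2) :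
    1/2 < t := by nlinarith

private lemma quadkey (l p r u v p' r' u' v' : ℝ)
    (h1 : u^2 + v^2 ≤ p*r) (h2 : u'^2 + v'^2 ≤ p'*r')
    (e1 : p' = p - l/2) (e2 : r' = r + l/2) (e3 : u' = u - l/2) (e4 : v' = v) :
    l^2 ≤ 2*(p+r)^2 := by
  rw [e1, e2, e3, e4] at h2
  nlinarith [h1, h2, sq_nonneg (4*u - l), sq_nonneg (2*p - 2*r - l), sq_nonneg v]

set_option maxHeartbeats 1000000 in
theorem stmt_3 (l : ℝ) (hl : 1 / Real.sqrt 2 < l) :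
    ¬ ∃ G : Bool → Bool → Matrix (Fin 2) (Fin 2) ℂ,
        (∀ i j, (G i j).PosSemidef) ∧
        (∑ i : Bool, ∑ j : Bool, G i j = 1) ∧
        (∀ i, ∑ j : Bool, G i j = smeared σx l i) ∧
        (∀ j, ∑ i : Bool, G i j = smeared σz l j) := by
  rintro ⟨G, hpsd, hsum, hx, hz⟩
  have hs2 : (0:ℝ) < Real.sqrt 2 := Real.sqrt_pos.mpr (by norm_num)
  have hlpos : 0 < l := lt_trans (by positivity) hl
  have hl2 : 1/2 < l^2 := by
    have hsq : (1/Real.sqrt 2)^2 = 1/2 := by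
      rw [div_pow, one_pow, Real.sq_sqrt (by norm_num : (0:ℝ) ≤ 2)]
    have h := mul_lt_mul'' hl hl (by positivity) (by positivity)
    nlinarith [hsq, h]
  obtain ⟨hA1, hB1, hC1⟩ := psd2 (hpsd true true)
  obtain ⟨hA2, hB2, hC2⟩ := psd2 (hpsd false false)
  obtain ⟨hA3, hB3, hC3⟩ := psd2 (hpsd true false)
  obtain ⟨hA4, hB4, hC4⟩ := psd2 (hpsd false true)
  -- entry variables
  set p1 := (G true true 0 0).re with hp1
  set r1 := (G true true 1 1).re with hr1
  set u1 := (G true true 0 1).re with hu1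
  set v1 := (G true true 0 1).im with hv1
  set p2 := (G false false 0 0).re with hp2
  set r2 := (G false false 1 1).re with hr2
  set u2 := (G false false 0 1).re with hu2
  set v2 := (G false false 0 1).im with hv2
  set p3 := (G true false 0 0).re with hp3
  set r3 := (G true false 1 1).re with hr3
  set u3 := (G true false 0 1).re with hu3
  set v3 := (G true false 0 1).im with hv3
  set p4 := (G false true 0 0).re with hp4
  set r4 := (G false true 1 1).re with hr4
  set u4 := (G false true 0 1).re with hu4
  set v4 := (G false true 0 1).im with hv4
  -- linear constraints from the marginals
  have Hx := hx true
  have Hzt := hz true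
  have Hzf := hz false
  rw [Fintype.sum_bool] at Hx Hzt Hzf
  -- helper to extract real/im parts
  have ex1 : p1 + p3 = 1/2 := by
    have := congrArg Complex.re (congrFun (congrFun Hx 0) 0)
    simp [Matrix.add_apply, smeared, σx, sgn, Matrix.smul_apply, Matrix.one_apply] at this
    linarith
  have ex2 : r1 + r3 = 1/2 := by
    have := congrArg Complex.re (congrFun (congrFun Hx 1) 1)
    simp [Matrix.add_apply, smeared, σx, sgn, Matrix.smul_apply, Matrix.one_apply] at this
    linarith
  have ex3 : u1 + u3 = l/2 := by
    have := congrArg Complex.re (congrFun (congrFun Hx 0) 1)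
    simp [Matrix.add_apply, smeared, σx, sgn, Matrix.smul_apply, Matrix.one_apply] at this
    linarith
  have ex4 : v1 + v3 = 0 := by
    have := congrArg Complex.im (congrFun (congrFun Hx 0) 1)
    simp [Matrix.add_apply, smeared, σx, sgn, Matrix.smul_apply, Matrix.one_apply] at this
    linarith
  have ezt1 : p1 + p4 = (1+l)/2 := by
    have := congrArg Complex.re (congrFun (congrFun Hzt 0) 0)
    simp [Matrix.add_apply, smeared, σz, sgn, Matrix.smul_apply, Matrix.one_apply] at this
    linarith
  have ezt2 : r1 + r4 = (1-l)/2 := by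
    have := congrArg Complex.re (congrFun (congrFun Hzt 1) 1)
    simp [Matrix.add_apply, smeared, σz, sgn, Matrix.smul_apply, Matrix.one_apply] at this
    linarith
  have ezt3 : u1 + u4 = 0 := by
    have := congrArg Complex.re (congrFun (congrFun Hzt 0) 1)
    simp [Matrix.add_apply, smeared, σz, sgn, Matrix.smul_apply, Matrix.one_apply] at this
    linarith
  have ezt4 : v1 + v4 = 0 := by
    have := congrArg Complex.im (congrFun (congrFun Hzt 0) 1)
    simp [Matrix.add_apply, smeared, σz, sgn, Matrix.smul_apply, Matrix.one_apply] at this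
    linarith
  have ezf1 : p2 + p3 = (1-l)/2 := by
    have := congrArg Complex.re (congrFun (congrFun Hzf 0) 0)
    simp [Matrix.add_apply, smeared, σz, sgn, Matrix.smul_apply, Matrix.one_apply] at this
    linarith
  have ezf2 : r2 + r3 = (1+l)/2 := by
    have := congrArg Complex.re (congrFun (congrFun Hzf 1) 1)
    simp [Matrix.add_apply, smeared, σz, sgn, Matrix.smul_apply, Matrix.one_apply] at this
    linarith
  have ezf3 : u2 + u3 = 0 := by
    have := congrArg Complex.re (congrFun (congrFun Hzf 0) 1)
    simp [Matrix.add_apply, smeared, σz, sgn, Matrix.smul_apply, Matrix.one_apply] at this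
    linarith
  have ezf4 : v2 + v3 = 0 := by
    have := congrArg Complex.im (congrFun (congrFun Hzf 0) 1)
    simp [Matrix.add_apply, smeared, σz, sgn, Matrix.smul_apply, Matrix.one_apply] at this
    linarith
  -- derived relations
  have d1 : p2 = p1 - l/2 := by linarith
  have d2 : r2 = r1 + l/2 := by linarith
  have d3 : u2 = u1 - l/2 := by linarith
  have d4 : v2 = v1 := by linarith
  have d5 : p4 = p3 + l/2 := by linarith
  have d6 : r4 = r3 - l/2 := by linarith
  have d7 : u4 = u3 - l/2 := by linarith
  have d8 : v4 = v3 := by linarith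
  -- quadratic consequences
  have key1 : l^2 ≤ 2*(p1 + r1)^2 := quadkey l p1 r1 u1 v1 p2 r2 u2 v2 hC1 hC2 d1 d2 d3 d4
  have key2 : l^2 ≤ 2*(r3 + p3)^2 :=
    quadkey l r3 p3 u3 v3 r4 p4 u4 v4 (by rw [mul_comm r3 p3]; exact hC3) (by rw [mul_comm r4 p4]; exact hC4) d6 d5 d7 d8
  have t1 : 1/2 < p1 + r1 := halfkey l _ (by linarith [hA1, hB1]) key1 hl2
  have t2 : 1/2 < p3 + r3 := halfkey l _ (by linarith [hA3, hB3]) (by linarith [key2]) hl2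
  linarith [t1, t2, ex1, ex2]
end

section
/- The three smeared Pauli measurements A_k^λ(±) = (1/2)(I ± λσ_k), k ∈ {x,y,z}, are jointly measurable if and only if λ ≤ 1/√3. -/
open Matrix ComplexOrder

noncomputable def σy : Matrix (Fin 2) (Fin 2) ℂ := !![0, -Complex.I; Complex.I, 0]
/-- Auxiliary real inequality for the forward direction. -/
lemma aux_fwd (s a d p E : ℝ) (hs : s*s = 3) (hk : p = 1 ∨ p = -1) (hs1 : 1 ≤ s)
    (hq : 0 ≤ 2*a + (p+s)^2*d - 2*(p+s)*E) : 2*E + p*(a-d) ≤ s*(a+d) := by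
  have e2d : s^2*d = 3*d := by linear_combination d*hs
  have e3d : s^3*d = 3*(s*d) := by linear_combination (s*d)*hs
  have e2E : s^2*E = 3*E := by linear_combination E*hs
  rcases hk with h | h <;> subst h
  · have key := mul_nonneg (by linarith : (0:ℝ) ≤ s - 1) hq
    nlinarith [key, e2d, e3d, e2E]
  · have key := mul_nonneg (by linarith : (0:ℝ) ≤ s + 1) hq
    nlinarith [key, e2d, e3d, e2E]

/-- The key spectral inequality extracted from positive semidefiniteness. -/
lemma fwd_key (M : Matrix (Fin 2) (Fin 2) ℂ) (hM : M.PosSemidef) (s : ℝ)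
    (hs : s*s = 3) (hs1 : 1 ≤ s) (i j k : Bool) :
    2*(sgn i * (M 0 1).re - sgn j * (M 0 1).im) + sgn k*((M 0 0).re - (M 1 1).re)
      ≤ s*((M 0 0).re + (M 1 1).re) := by
  have h10 : M 1 0 = star (M 0 1) := by
    have := congrFun (congrFun hM.1 1) 0
    simpa using this.symm
  have hq := hM.re_dotProduct_nonneg
    ![(sgn i : ℂ) - Complex.I * (sgn j : ℂ), -(((sgn k : ℝ) + s : ℝ) : ℂ)]
  rcases i <;> rcases j <;> rcases k <;>
  · simp only [sgn, if_true, if_false, Bool.false_eq_true] at hq ⊢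
    simp [dotProduct, Matrix.mulVec, Fin.sum_univ_two, h10, Complex.add_re, Complex.mul_re,
      Complex.sub_re, Complex.sub_im, Complex.add_im, Complex.mul_im] at hq
    first
    | (have := aux_fwd s ((M 0 0).re) ((M 1 1).re) 1 ((M 0 1).re - (M 0 1).im) hs (Or.inl rfl) hs1 (by linarith [hq]); linarith [this])
    | (have := aux_fwd s ((M 0 0).re) ((M 1 1).re) (-1) ((M 0 1).re - (M 0 1).im) hs (Or.inr rfl) hs1 (by linarith [hq]); linarith [this])
    | (have := aux_fwd s ((M 0 0).re) ((M 1 1).re) 1 ((M 0 1).re + (M 0 1).im) hs (Or.inl rfl) hs1 (by linarith [hq]); linarith [this])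
    | (have := aux_fwd s ((M 0 0).re) ((M 1 1).re) (-1) ((M 0 1).re + (M 0 1).im) hs (Or.inr rfl) hs1 (by linarith [hq]); linarith [this])
    | (have := aux_fwd s ((M 0 0).re) ((M 1 1).re) 1 (-(M 0 1).re - (M 0 1).im) hs (Or.inl rfl) hs1 (by linarith [hq]); linarith [this])
    | (have := aux_fwd s ((M 0 0).re) ((M 1 1).re) (-1) (-(M 0 1).re - (M 0 1).im) hs (Or.inr rfl) hs1 (by linarith [hq]); linarith [this])
    | (have := aux_fwd s ((M 0 0).re) ((M 1 1).re) 1 (-(M 0 1).re + (M 0 1).im) hs (Or.inl rfl) hs1 (by linarith [hq]); linarith [this])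
    | (have := aux_fwd s ((M 0 0).re) ((M 1 1).re) (-1) (-(M 0 1).re + (M 0 1).im) hs (Or.inr rfl) hs1 (by linarith [hq]); linarith [this])

/-- Cauchy–Schwarz type inequality with coefficient vector of norm √3. -/
lemma cauchy3 (s C R I T : ℝ) (hs : s*s = 3) (hs0 : 0 ≤ s) (hT : 0 ≤ T)
    (hsum : C^2 + 4*(R^2 + I^2) ≤ T^2) : C + 2*R + 2*I ≤ s*T := by
  have h1 : (C+2*R+2*I)^2 ≤ 3*T^2 := by
    nlinarith [sq_nonneg (C-2*R), sq_nonneg (C-2*I), sq_nonneg (2*R-2*I)]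
  by_contra hcon
  push_neg at hcon
  have hX : 0 < C+2*R+2*I := lt_of_le_of_lt (mul_nonneg hs0 hT) hcon
  have e : s*T*(s*T) = 3*(T*T) := by linear_combination (T*T)*hs
  nlinarith [h1, e, mul_pos (sub_pos.2 hcon)
    (by nlinarith [mul_nonneg hs0 hT] : (0:ℝ) < C+2*R+2*I + s*T)]

/-- Auxiliary real inequality for positive semidefiniteness in the backward direction. -/
lemma aux_bwd (l s i' j' k' u0 u1 v0 v1 : ℝ) (hl0 : 0 ≤ l) (hs : s*s = 3) (hs0 : 0 ≤ s)
    (hls : l*s ≤ 1) (hi : i' = 1 ∨ i' = -1) (hj : j' = 1 ∨ j' = -1) (hk : k' = 1 ∨ k' = -1) :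
    0 ≤ (1 + k'*l)*(u0^2+u1^2) + (1 - k'*l)*(v0^2+v1^2)
      + 2*l*(i'*(u0*v0+u1*v1) + j'*(u0*v1 - u1*v0)) := by
  have hi2 : i'^2 = 1 := by rcases hi with rfl | rfl <;> norm_num
  have hj2 : j'^2 = 1 := by rcases hj with rfl | rfl <;> norm_num
  have hk2 : k'^2 = 1 := by rcases hk with rfl | rfl <;> norm_num
  have eq : (-k'*((u0^2+u1^2) - (v0^2+v1^2)))^2
      + 4*((-i'*(u0*v0+u1*v1))^2 + (-j'*(u0*v1-u1*v0))^2)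
      = (u0^2+u1^2+v0^2+v1^2)^2 := by
    linear_combination ((u0^2+u1^2) - (v0^2+v1^2))^2*hk2 + (4*(u0*v0+u1*v1)^2)*hi2
      + (4*(u0*v1-u1*v0)^2)*hj2
  have hT : (0:ℝ) ≤ u0^2+u1^2+v0^2+v1^2 := by positivity
  have hCS := cauchy3 s (-k'*((u0^2+u1^2) - (v0^2+v1^2))) (-i'*(u0*v0+u1*v1))
    (-j'*(u0*v1-u1*v0)) (u0^2+u1^2+v0^2+v1^2) hs hs0 hT (le_of_eq eq)
  have h1 := mul_le_mul_of_nonneg_left hCS hl0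
  have h2 := mul_le_mul_of_nonneg_right hls hT
  nlinarith [h1, h2]

/-- The explicit joint observable. -/
noncomputable def Gc (l : ℝ) (i j k : Bool) : Matrix (Fin 2) (Fin 2) ℂ :=
  !![(((1 + sgn k * l)/8 : ℝ) : ℂ), ((l/8 : ℝ) : ℂ) * ((sgn i : ℂ) - Complex.I * (sgn j : ℂ));
     ((l/8 : ℝ) : ℂ) * ((sgn i : ℂ) + Complex.I * (sgn j : ℂ)), (((1 - sgn k * l)/8 : ℝ) : ℂ)]

lemma Gc_posSemidef (l : ℝ) (hl0 : 0 ≤ l) (hls : l * Real.sqrt 3 ≤ 1) (i j k : Bool) :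
    (Gc l i j k).PosSemidef := by
  constructor
  · unfold Matrix.IsHermitian
    ext a b
    fin_cases a <;> fin_cases b <;>
      simp [Gc, Matrix.conjTranspose_apply, Complex.conj_ofReal, _root_.map_mul, map_sub,
        map_add, Complex.conj_I] <;> (try ring) <;> tauto
  · intro x
    rw [Complex.le_def]
    have hs : Real.sqrt 3 * Real.sqrt 3 = 3 := Real.mul_self_sqrt (by norm_num)
    have hs0 : (0:ℝ) ≤ Real.sqrt 3 := Real.sqrt_nonneg 3
    have hi : sgn i = 1 ∨ sgn i = -1 := by rcases i <;> simp [sgn]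
    have hj : sgn j = 1 ∨ sgn j = -1 := by rcases j <;> simp [sgn]
    have hk : sgn k = 1 ∨ sgn k = -1 := by rcases k <;> simp [sgn]
    constructor
    · simp only [Complex.zero_re]
      have key := aux_bwd l (Real.sqrt 3) (sgn i) (sgn j) (sgn k)
        ((x 0).re) ((x 0).im) ((x 1).re) ((x 1).im) hl0 hs hs0 hls hi hj hk
      simp [Gc, Finsupp.sum_fintype, dotProduct, Matrix.mulVec, Fin.sum_univ_two, Complex.add_re, Complex.mul_re,
        Complex.add_im, Complex.mul_im, Complex.sub_re, Complex.sub_im]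
      nlinarith [key]
    · simp [Gc, Finsupp.sum_fintype, dotProduct, Matrix.mulVec, Fin.sum_univ_two, Complex.add_re, Complex.mul_re,
        Complex.add_im, Complex.mul_im, Complex.sub_re, Complex.sub_im]
      ring_nf

set_option maxHeartbeats 1000000 in
theorem stmt_4 (l : ℝ) (hl0 : 0 ≤ l) :
    (∃ G : Bool → Bool → Bool → Matrix (Fin 2) (Fin 2) ℂ,
        (∀ i j k, (G i j k).PosSemidef) ∧
        (∑ i : Bool, ∑ j : Bool, ∑ k : Bool, G i j k = 1) ∧
        (∀ i, ∑ j : Bool, ∑ k : Bool, G i j k = smeared σx l i) ∧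
        (∀ j, ∑ i : Bool, ∑ k : Bool, G i j k = smeared σy l j) ∧
        (∀ k, ∑ i : Bool, ∑ j : Bool, G i j k = smeared σz l k)) ↔
      l ≤ 1 / Real.sqrt 3 := by
  have hs : Real.sqrt 3 * Real.sqrt 3 = 3 := Real.mul_self_sqrt (by norm_num)
  have hs0 : (0:ℝ) ≤ Real.sqrt 3 := Real.sqrt_nonneg 3
  have hs1 : (1:ℝ) ≤ Real.sqrt 3 := by nlinarith
  have hspos : (0:ℝ) < Real.sqrt 3 := by linarith
  constructor
  · rintro ⟨G, hpsd, hsum, hx, hy, hz⟩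
    set s := Real.sqrt 3 with hsdef
    have q1 := fwd_key (G true true true) (hpsd true true true) s hs hs1 true true true
    have q2 := fwd_key (G true true false) (hpsd true true false) s hs hs1 true true false
    have q3 := fwd_key (G true false true) (hpsd true false true) s hs hs1 true false true
    have q4 := fwd_key (G true false false) (hpsd true false false) s hs hs1 true false false
    have q5 := fwd_key (G false true true) (hpsd false true true) s hs hs1 false true true
    have q6 := fwd_key (G false true false) (hpsd false true false) s hs hs1 false true false
    have q7 := fwd_key (G false false true) (hpsd false false true) s hs hs1 false false true
    have q8 := fwd_key (G false false false) (hpsd false false false) s hs hs1 false false false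
    norm_num [sgn] at q1 q2 q3 q4 q5 q6 q7 q8
    have ex1 := congrArg Complex.re (congrFun (congrFun (hx true) 0) 1)
    have ex2 := congrArg Complex.re (congrFun (congrFun (hx false) 0) 1)
    have ey1 := congrArg Complex.im (congrFun (congrFun (hy true) 0) 1)
    have ey2 := congrArg Complex.im (congrFun (congrFun (hy false) 0) 1)
    have ez1 := congrArg Complex.re (congrFun (congrFun (hz true) 0) 0)
    have ez2 := congrArg Complex.re (congrFun (congrFun (hz false) 0) 0)
    have ez3 := congrArg Complex.re (congrFun (congrFun (hz true) 1) 1)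
    have ez4 := congrArg Complex.re (congrFun (congrFun (hz false) 1) 1)
    simp [Fintype.sum_bool, Matrix.add_apply, smeared, σx, σy, σz, sgn, Matrix.smul_apply,
      Matrix.one_apply, Complex.add_re, Complex.add_im, Complex.mul_re, Complex.mul_im]
      at ex1 ex2 ey1 ey2 ez1 ez2 ez3 ez4
    have ez1s := congrArg (fun t => s * t) ez1
    have ez2s := congrArg (fun t => s * t) ez2
    have ez3s := congrArg (fun t => s * t) ez3
    have ez4s := congrArg (fun t => s * t) ez4
    have h3l : 3 * l ≤ s := by
      linarith [q1, q2, q3, q4, q5, q6, q7, q8, ex1, ex2, ey1, ey2, ez1s, ez2s, ez3s, ez4s]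
    rw [le_div_iff₀ hspos]
    have hfin := mul_le_mul_of_nonneg_right h3l hs0
    linarith [hfin, hs]
  · intro hl
    have hls : l * Real.sqrt 3 ≤ 1 := by
      have := mul_le_mul_of_nonneg_right hl hs0
      rwa [one_div, inv_mul_cancel₀ (ne_of_gt hspos)] at this
    refine ⟨Gc l, Gc_posSemidef l hl0 hls, ?_, ?_, ?_, ?_⟩
    · ext a b
      fin_cases a <;> fin_cases b <;>
        simp [Gc, sgn, Fintype.sum_bool, Matrix.add_apply, Matrix.one_apply, Complex.ext_iff] <;>
        push_cast <;> norm_num <;> (try constructor) <;> ring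
    · intro i
      ext a b
      fin_cases a <;> fin_cases b <;>
        simp [Gc, smeared, σx, sgn, Fintype.sum_bool, Matrix.add_apply, Matrix.one_apply,
          Matrix.smul_apply, Complex.ext_iff] <;> rcases i <;> push_cast <;> norm_num <;>
        (try constructor) <;> ring
    · intro j
      ext a b
      fin_cases a <;> fin_cases b <;>
        simp [Gc, smeared, σy, sgn, Fintype.sum_bool, Matrix.add_apply, Matrix.one_apply,
          Matrix.smul_apply, Complex.ext_iff] <;> rcases j <;> push_cast <;> norm_num <;>
        (try constructor) <;> ring
    · intro k
      ext a b
      fin_cases a <;> fin_cases b <;>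
        simp [Gc, smeared, σz, sgn, Fintype.sum_bool, Matrix.add_apply, Matrix.one_apply,
          Matrix.smul_apply, Complex.ext_iff] <;> rcases k <;> push_cast <;> norm_num <;>
        (try constructor) <;> ring
end

section
/- A finite collection of POVMs {A_k} on ℂ^d is jointly measurable if and only if the assemblage obtained by measuring them on Alice's half of the maximally entangled state |φ⁺⟩ = (1/√d)∑_i|ii⟩ admits a hidden state model (i.e., is non-steerable). -/
open Matrix ComplexOrder Kronecker

/-- Partial trace over the first (Alice's) tensor factor. -/
noncomputable def ptraceA {d : ℕ} (ρ : Matrix (Fin d × Fin d) (Fin d × Fin d) ℂ) :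
    Matrix (Fin d) (Fin d) ℂ :=
  Matrix.of fun j j' => ∑ i : Fin d, ρ (i, j) (i, j')

/-- The projector onto the maximally entangled state `|φ⁺⟩ = (1/√d) ∑ i, |ii⟩`. -/
noncomputable def maxEntProj (d : ℕ) : Matrix (Fin d × Fin d) (Fin d × Fin d) ℂ :=
  Matrix.of fun p q => if p.1 = p.2 ∧ q.1 = q.2 then (1 / d : ℂ) else 0

/-- Joint measurability of a finite collection of POVMs `A k` with outcomes in `X`. -/
def JointlyMeasurable {n : ℕ} {K X : Type*} [Fintype X]
    (A : K → X → Matrix (Fin n) (Fin n) ℂ) : Prop :=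
  ∃ (m : ℕ) (G : Fin m → Matrix (Fin n) (Fin n) ℂ) (D : Fin m → K → X → ℝ),
    (∀ lam, (G lam).PosSemidef) ∧ (∑ lam, G lam = 1) ∧
    (∀ lam k x, 0 ≤ D lam k x) ∧ (∀ lam k, ∑ x, D lam k x = 1) ∧
    (∀ k x, A k x = ∑ lam, ((D lam k x : ℝ) : ℂ) • G lam)

/-- A hidden state model (local hidden state model) for an assemblage. -/
def HiddenStateModel {d : ℕ} {K X : Type*} [Fintype X]
    (ρ : K → X → Matrix (Fin d) (Fin d) ℂ) : Prop :=
  ∃ (m : ℕ) (σ : Fin m → Matrix (Fin d) (Fin d) ℂ) (p : Fin m → K → X → ℝ),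
    (∀ lam, (σ lam).PosSemidef) ∧ (∑ lam, (σ lam).trace = 1) ∧
    (∀ lam k x, 0 ≤ p lam k x) ∧ (∀ lam k, ∑ x, p lam k x = 1) ∧
    (∀ k x, ρ k x = ∑ lam, ((p lam k x : ℝ) : ℂ) • σ lam)

lemma psd_smul' {n : ℕ} (c : ℝ) (hc : 0 ≤ c) {B : Matrix (Fin n) (Fin n) ℂ}
    (h : B.PosSemidef) : ((c : ℂ) • B).PosSemidef := by
  refine Matrix.PosSemidef.of_dotProduct_mulVec_nonneg ?_ fun x => ?_
  · unfold Matrix.IsHermitian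
    rw [conjTranspose_smul, h.1.eq]
    simp
  · rw [smul_mulVec, dotProduct_smul, smul_eq_mul]
    exact mul_nonneg (by exact_mod_cast hc) (h.dotProduct_mulVec_nonneg x)

lemma ptrace_key {d : ℕ} (B : Matrix (Fin d) (Fin d) ℂ) :
    ptraceA ((B ⊗ₖ (1 : Matrix (Fin d) (Fin d) ℂ)) * maxEntProj d) = (d : ℂ)⁻¹ • Bᵀ := by
  ext j j'
  simp [ptraceA, maxEntProj, Matrix.mul_apply, Matrix.kroneckerMap_apply,
    Fintype.sum_prod_type, Matrix.one_apply, ite_and, mul_comm]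

theorem stmt_8 {d : ℕ} (hd : 0 < d) {K X : Type*} [Fintype K] [Fintype X]
    (A : K → X → Matrix (Fin d) (Fin d) ℂ)
    (hpos : ∀ k x, (A k x).PosSemidef) (hsum : ∀ k, ∑ x, A k x = 1) :
    JointlyMeasurable A ↔
      HiddenStateModel (fun k x =>
        ptraceA ((A k x ⊗ₖ (1 : Matrix (Fin d) (Fin d) ℂ)) * maxEntProj d)) := by
  have hdC : (d : ℂ) ≠ 0 := Nat.cast_ne_zero.mpr hd.ne'
  have hcast : ((d : ℝ)⁻¹ : ℂ) = (d : ℂ)⁻¹ := by push_cast; ring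
  constructor
  · rintro ⟨m, G, D, hG, hGsum, hD, hDsum, hA⟩
    refine ⟨m, fun lam => (d : ℂ)⁻¹ • (G lam)ᵀ, D, fun lam => ?_, ?_, hD, hDsum, fun k x => ?_⟩
    · have h := psd_smul' (d : ℝ)⁻¹ (by positivity) (hG lam).transpose
      show ((d : ℂ)⁻¹ • (G lam)ᵀ).PosSemidef
      push_cast at h
      exact h
    · have : ∑ lam, ((d : ℂ)⁻¹ • (G lam)ᵀ).trace
          = (d : ℂ)⁻¹ * (∑ lam, G lam)ᵀ.trace := by
        simp [trace_smul, Finset.mul_sum, transpose_sum]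
      rw [this, hGsum]
      simp [Matrix.trace_one, hdC]
    · show ptraceA _ = _
      rw [ptrace_key, hA k x]
      simp only [transpose_sum, transpose_smul, Finset.smul_sum]
      exact Finset.sum_congr rfl fun lam _ => smul_comm _ _ _
  · rintro ⟨m, σ, p, hσ, htr, hp, hpsum, hρ⟩
    simp only [ptrace_key] at hρ
    by_cases hK : Nonempty K
    · obtain ⟨k0⟩ := hK
      have hσsum : ∑ lam, σ lam = (d : ℂ)⁻¹ • (1 : Matrix (Fin d) (Fin d) ℂ) := by
        have h1 : ∑ x, ((d : ℂ)⁻¹ • (A k0 x)ᵀ) = ∑ x, ∑ lam, ((p lam k0 x : ℝ) : ℂ) • σ lam :=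
          Finset.sum_congr rfl fun x _ => hρ k0 x
        rw [Finset.sum_comm] at h1
        have h2 : ∑ lam, ∑ x, ((p lam k0 x : ℝ) : ℂ) • σ lam = ∑ lam, σ lam := by
          refine Finset.sum_congr rfl fun lam _ => ?_
          rw [← Finset.sum_smul]
          have : ∑ x, ((p lam k0 x : ℝ) : ℂ) = 1 := by
            rw [← Complex.ofReal_sum, hpsum lam k0, Complex.ofReal_one]
          rw [this, one_smul]
        rw [h2] at h1
        rw [← h1, ← Finset.smul_sum, ← transpose_sum, hsum k0, transpose_one]
      refine ⟨m, fun lam => (d : ℂ) • (σ lam)ᵀ, p, fun lam => ?_, ?_, hp, hpsum, fun k x => ?_⟩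
      · have h := psd_smul' (d : ℝ) (by positivity) (hσ lam).transpose
        show ((d : ℂ) • (σ lam)ᵀ).PosSemidef
        push_cast at h
        exact h
      · rw [← Finset.smul_sum, ← transpose_sum, hσsum]
        simp [smul_smul, hdC]
      · have h := hρ k x
        have : (A k x)ᵀ = ∑ lam, ((p lam k x : ℝ) : ℂ) • ((d : ℂ) • σ lam) := by
          calc (A k x)ᵀ = (d : ℂ) • ((d : ℂ)⁻¹ • (A k x)ᵀ) := by
                rw [smul_smul, mul_inv_cancel₀ hdC, one_smul]
            _ = (d : ℂ) • ∑ lam, ((p lam k x : ℝ) : ℂ) • σ lam := by rw [h]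
            _ = ∑ lam, ((p lam k x : ℝ) : ℂ) • ((d : ℂ) • σ lam) := by
                rw [Finset.smul_sum]
                exact Finset.sum_congr rfl fun lam _ => smul_comm _ _ _
        calc A k x = (A k x)ᵀᵀ := (transpose_transpose _).symm
          _ = ∑ lam, ((p lam k x : ℝ) : ℂ) • ((d : ℂ) • (σ lam)ᵀ) := by
              rw [this, transpose_sum]
              exact Finset.sum_congr rfl fun lam _ => by
                rw [transpose_smul, transpose_smul]
    · refine ⟨1, fun _ => 1, fun _ _ _ => 0, fun lam => PosSemidef.one, by simp [hdC],
        fun lam k x => (hK ⟨k⟩).elim, fun lam k => (hK ⟨k⟩).elim,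
        fun k x => (hK ⟨k⟩).elim⟩
end

section
/- If a state ρ_AB admits a hidden state model (is unsteerable) for all POVM measurements of Alice, then for any λ ∈ [0,1] the noisy state ρ_AB^λ = λρ_AB + ((1−λ)/d) I ⊗ Tr_A[ρ_AB] is also unsteerable for all POVM measurements of Alice. -/
open Matrix ComplexOrder Kronecker

/-- Unsteerability of a bipartite state for all (finite collections of) POVMs of Alice. -/
def UnsteerableAllPOVM {d : ℕ} (ρAB : Matrix (Fin d × Fin d) (Fin d × Fin d) ℂ) : Prop :=
  ∀ (nK nX : ℕ) (A : Fin nK → Fin nX → Matrix (Fin d) (Fin d) ℂ),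
    (∀ k x, (A k x).PosSemidef) → (∀ k, ∑ x, A k x = 1) →
    HiddenStateModel (fun k x =>
      ptraceA ((A k x ⊗ₖ (1 : Matrix (Fin d) (Fin d) ℂ)) * ρAB))

lemma psd_smul {n : Type*} [Fintype n] {c : ℂ} (hc : 0 ≤ c)
    {M : Matrix n n ℂ} (hM : M.PosSemidef) : (c • M).PosSemidef := by
  have hcr : (starRingEnd ℂ) c = c := Complex.conj_eq_iff_im.2 (Complex.nonneg_iff.1 hc).2.symm
  refine Matrix.PosSemidef.of_dotProduct_mulVec_nonneg ?_ (fun x => ?_)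
  · unfold Matrix.IsHermitian
    rw [Matrix.conjTranspose_smul, hM.1, Complex.star_def, hcr]
  · rw [Matrix.smul_mulVec, dotProduct_smul, smul_eq_mul]
    exact mul_nonneg hc (hM.dotProduct_mulVec_nonneg x)

lemma psd_trace_nonneg {n : Type*} [Fintype n] [DecidableEq n]
    {M : Matrix n n ℂ} (hM : M.PosSemidef) : 0 ≤ M.trace := by
  refine Finset.sum_nonneg fun i _ => ?_
  have := hM.dotProduct_mulVec_nonneg (Pi.single i 1)
  simpa [dotProduct, Matrix.mulVec, Pi.single_apply, Finset.mul_sum] using this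

lemma ptraceA_add {d : ℕ} (A B : Matrix (Fin d × Fin d) (Fin d × Fin d) ℂ) :
    ptraceA (A + B) = ptraceA A + ptraceA B := by
  ext j j'
  simp [ptraceA, Finset.sum_add_distrib]

lemma ptraceA_smul {d : ℕ} (c : ℂ) (A : Matrix (Fin d × Fin d) (Fin d × Fin d) ℂ) :
    ptraceA (c • A) = c • ptraceA A := by
  ext j j'
  simp [ptraceA, Finset.mul_sum]

lemma ptraceA_kron {d : ℕ} (A B : Matrix (Fin d) (Fin d) ℂ) :
    ptraceA (A ⊗ₖ B) = A.trace • B := by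
  ext j j'
  simp [ptraceA, Matrix.trace, Matrix.kroneckerMap_apply, Finset.sum_mul, Matrix.diag]

theorem stmt_18 {d : ℕ} (hd : 0 < d)
    (ρAB : Matrix (Fin d × Fin d) (Fin d × Fin d) ℂ)
    (hρ : ρAB.PosSemidef) (hρtr : ρAB.trace = 1)
    (hunst : UnsteerableAllPOVM ρAB)
    (l : ℝ) (hl0 : 0 ≤ l) (hl1 : l ≤ 1) :
    UnsteerableAllPOVM
      (((l : ℂ)) • ρAB + (((1 - l : ℝ) : ℂ) / d) •
        ((1 : Matrix (Fin d) (Fin d) ℂ) ⊗ₖ ptraceA ρAB)) := by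
  intro nK nX A hApsd hAsum
  set τ := ptraceA ρAB with hτ
  set c0 : ℂ := ((1 - l : ℝ) : ℂ) / d with hc0
  have hc0eq : c0 = (((1 - l) / d : ℝ) : ℂ) := by rw [hc0]; push_cast; ring
  have hc0nn : 0 ≤ c0 := by
    rw [hc0eq]
    exact Complex.zero_le_real.2 (div_nonneg (by linarith) (Nat.cast_nonneg d))
  -- noisy POVM
  set A' : Fin nK → Fin nX → Matrix (Fin d) (Fin d) ℂ :=
    fun k x => (l : ℂ) • A k x + (c0 * (A k x).trace) • 1 with hA'
  have hlnn : (0:ℂ) ≤ (l:ℂ) := Complex.zero_le_real.2 hl0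
  have hA'psd : ∀ k x, (A' k x).PosSemidef := by
    intro k x
    refine Matrix.PosSemidef.add (psd_smul hlnn (hApsd k x))
      (psd_smul (mul_nonneg hc0nn (psd_trace_nonneg (hApsd k x))) Matrix.PosSemidef.one)
  have hA'sum : ∀ k, ∑ x, A' k x = 1 := by
    intro k
    have htr : ∑ x, (A k x).trace = (d : ℂ) := by
      rw [← Matrix.trace_sum, hAsum k, Matrix.trace_one]
      simp
    have hdne : (d : ℂ) ≠ 0 := by
      exact_mod_cast Nat.cast_ne_zero.2 hd.ne'
    calc ∑ x, A' k x
        = (l : ℂ) • (∑ x, A k x) + (c0 * ∑ x, (A k x).trace) • 1 := by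
          rw [hA', Finset.sum_add_distrib, ← Finset.smul_sum, Finset.mul_sum, Finset.sum_smul]
      _ = (l : ℂ) • 1 + ((1 - l : ℝ) : ℂ) • 1 := by
          rw [hAsum k, htr, hc0, div_mul_cancel₀ _ hdne]
      _ = 1 := by
          rw [← add_smul]
          push_cast
          simp
  have key : ∀ k x,
      ptraceA ((A k x ⊗ₖ (1 : Matrix (Fin d) (Fin d) ℂ)) *
        ((l : ℂ) • ρAB + c0 • ((1 : Matrix (Fin d) (Fin d) ℂ) ⊗ₖ τ)))
      = ptraceA ((A' k x ⊗ₖ (1 : Matrix (Fin d) (Fin d) ℂ)) * ρAB) := by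
    intro k x
    have h1 : (A k x ⊗ₖ (1 : Matrix (Fin d) (Fin d) ℂ)) *
        ((1 : Matrix (Fin d) (Fin d) ℂ) ⊗ₖ τ) = A k x ⊗ₖ τ := by
      rw [← Matrix.mul_kronecker_mul, Matrix.mul_one, Matrix.one_mul]
    have h2 : (A' k x ⊗ₖ (1 : Matrix (Fin d) (Fin d) ℂ)) =
        (l : ℂ) • (A k x ⊗ₖ (1 : Matrix (Fin d) (Fin d) ℂ)) +
        (c0 * (A k x).trace) • (1 : Matrix (Fin d × Fin d) (Fin d × Fin d) ℂ) := by
      rw [hA', Matrix.add_kronecker, Matrix.smul_kronecker, Matrix.smul_kronecker,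
        Matrix.one_kronecker_one]
    rw [mul_add, Matrix.mul_smul, Matrix.mul_smul, h1, ptraceA_add, ptraceA_smul,
      ptraceA_smul, ptraceA_kron, h2, Matrix.add_mul, Matrix.smul_mul, Matrix.smul_mul,
      Matrix.one_mul, ptraceA_add, ptraceA_smul, ptraceA_smul, smul_smul, hτ]
  have := hunst nK nX A' hA'psd hA'sum
  have heq : (fun k x => ptraceA ((A' k x ⊗ₖ (1 : Matrix (Fin d) (Fin d) ℂ)) * ρAB))
      = (fun k x => ptraceA ((A k x ⊗ₖ (1 : Matrix (Fin d) (Fin d) ℂ)) *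
        ((l : ℂ) • ρAB + c0 • ((1 : Matrix (Fin d) (Fin d) ℂ) ⊗ₖ τ)))) := by
    funext k x
    exact (key k x).symm
  rw [heq] at this
  exact this
end
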